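/- arXiv:1203.2980 — 8 statements merged into one kernel-verified Lean document; each statement's English description precedes it below -/
import Mathlib

section
/- Let α ≥ 1 + √(1 + π²/4) and define Φ(r,z) = (4α²r² − (8α + π²)) e^{-α r²} sin(π z). Then for all r ≥ 1 and all z ∈ [0,1], one has 0 ≤ Φ(r,z) ≤ 4α² e^{-α}. -/
open Real

/-- For `α ≥ 1 + √(1 + π²/4)` and
`Φ(r,z) = (4α²r² − (8α + π²)) e^{-α r²} sin(π z)`, for all `r ≥ 1` and `z ∈ [0,1]`,
`0 ≤ Φ(r,z) ≤ 4α² e^{-α}`. -/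
theorem stmt_1 (α : ℝ) (hα : 1 + Real.sqrt (1 + π ^ 2 / 4) ≤ α)
    (r z : ℝ) (hr : 1 ≤ r) (hz : z ∈ Set.Icc (0 : ℝ) 1) :
    0 ≤ (4 * α ^ 2 * r ^ 2 - (8 * α + π ^ 2)) * Real.exp (-α * r ^ 2) * Real.sin (π * z)
    ∧ (4 * α ^ 2 * r ^ 2 - (8 * α + π ^ 2)) * Real.exp (-α * r ^ 2) * Real.sin (π * z)
        ≤ 4 * α ^ 2 * Real.exp (-α) := by
  obtain ⟨hz0, hz1⟩ := hz
  have hπ := Real.pi_pos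
  have hs0 : 0 ≤ Real.sin (π * z) :=
    Real.sin_nonneg_of_nonneg_of_le_pi (by positivity) (by nlinarith)
  have hs1 : Real.sin (π * z) ≤ 1 := Real.sin_le_one _
  have hsq : Real.sqrt (1 + π ^ 2 / 4) ^ 2 = 1 + π ^ 2 / 4 :=
    Real.sq_sqrt (by positivity)
  have hsn := Real.sqrt_nonneg (1 + π ^ 2 / 4)
  have hA : 8 * α + π ^ 2 ≤ 4 * α ^ 2 := by nlinarith
  have hα1 : 1 ≤ α := by nlinarith
  have hr2 : 1 ≤ r ^ 2 := by nlinarith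
  have hexp : 0 < Real.exp (-α * r ^ 2) := Real.exp_pos _
  have hnn : 0 ≤ 4 * α ^ 2 * r ^ 2 - (8 * α + π ^ 2) := by nlinarith
  constructor
  · exact mul_nonneg (mul_nonneg hnn hexp.le) hs0
  · have key : r ^ 2 * Real.exp (-α * r ^ 2) ≤ Real.exp (-α) := by
      have h1 : r ^ 2 ≤ Real.exp (α * (r ^ 2 - 1)) := by
        have := Real.add_one_le_exp (α * (r ^ 2 - 1))
        nlinarith
      calc r ^ 2 * Real.exp (-α * r ^ 2)
          ≤ Real.exp (α * (r ^ 2 - 1)) * Real.exp (-α * r ^ 2) :=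
            mul_le_mul_of_nonneg_right h1 hexp.le
        _ = Real.exp (-α) := by rw [← Real.exp_add]; ring_nf
    calc (4 * α ^ 2 * r ^ 2 - (8 * α + π ^ 2)) * Real.exp (-α * r ^ 2) * Real.sin (π * z)
        ≤ 4 * α ^ 2 * r ^ 2 * Real.exp (-α * r ^ 2) * 1 := by
          apply mul_le_mul _ hs1 hs0 (by positivity)
          apply mul_le_mul_of_nonneg_right _ hexp.le
          nlinarith
      _ = 4 * α ^ 2 * (r ^ 2 * Real.exp (-α * r ^ 2)) := by ring
      _ ≤ 4 * α ^ 2 * Real.exp (-α) :=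
          mul_le_mul_of_nonneg_left key (by positivity)
end

section
/- Let α ≥ 1 + √(1 + π²/4), let φ(r,z) = e^{-α r²} sin(π z), let Φ(r,z) = (4α²r² − (8α + π²)) φ(r,z), and let c₀ = (3/(2π²)) ∫₀¹ ∫₁^∞ (4α²r² − (8α + π²))² φ(r,z) r³ dr dz. Let u : (1,∞) × (0,1) → ℝ be measurable with u(r,z) ≠ 0 almost everywhere, such that (r,z) ↦ u(r,z)² φ(r,z) r³ and (r,z) ↦ log(u(r,z)²) Φ(r,z) r³ are both integrable on (1,∞) × (0,1). If ∫₀¹ ∫₁^∞ log(u²) Φ r³ dr dz ≥ 0, then (∫₀¹ ∫₁^∞ log(u²) Φ r³ dr dz)² ≤ (8 c₀ π²/3) ∫₀¹ ∫₁^∞ u² φ r³ dr dz. -/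
open Real MeasureTheory

lemma stmt4_intpow {b : ℝ} (hb : 0 < b) (n : ℕ) :
    Integrable (fun x : ℝ => x ^ n * Real.exp (-b * x ^ 2)) := by
  have h : (-1:ℝ) < (n:ℝ) := lt_of_lt_of_le (by norm_num) (Nat.cast_nonneg n)
  have := integrable_rpow_mul_exp_neg_mul_sq hb h
  simpa [Real.rpow_natCast] using this

lemma stmt4_quad {I A B : ℝ} (hI : 0 ≤ I) (hA : 0 ≤ A) (hB : 0 ≤ B)
    (key : ∀ ε : ℝ, 0 < ε → ε * I ≤ ε ^ 2 * B + A) : I ^ 2 ≤ 4 * A * B := by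
  rcases eq_or_lt_of_le hI with h0 | h0
  · nlinarith
  rcases eq_or_lt_of_le hB with hB0 | hB0
  · have := key ((A + 1) / I) (by positivity)
    rw [← hB0] at this
    have hAI : (A + 1) / I * I = A + 1 := div_mul_cancel₀ _ (ne_of_gt h0)
    nlinarith
  · have := key (I / (2 * B)) (by positivity)
    have h2B : (0:ℝ) < 2 * B := by linarith
    rw [div_pow] at this
    have h1 : I / (2 * B) * I = I ^ 2 / (2 * B) := by ring
    have h2 : I ^ 2 / (2 * B) ^ 2 * B = I ^ 2 / (4 * B) := by
      field_simp; ring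
    rw [h1, h2] at this
    have h3 : I ^ 2 / (2 * B) - I ^ 2 / (4 * B) = I ^ 2 / (4 * B) := by
      field_simp; ring
    have h4 : I ^ 2 / (4 * B) ≤ A := by linarith
    calc I ^ 2 = I ^ 2 / (4 * B) * (4 * B) := by field_simp
    _ ≤ A * (4 * B) := by nlinarith
    _ = 4 * A * B := by ring


set_option maxHeartbeats 1000000 in
/-- With `φ(r,z) = e^{-αr²} sin(πz)`, `Φ(r,z) = (4α²r² − (8α+π²)) φ(r,z)`,
`α ≥ 1 + √(1+π²/4)` and `c₀ = (3/(2π²)) ∫∫ (4α²r² − (8α+π²))² φ r³ dr dz`, if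
`u` is measurable and a.e. nonzero on `(1,∞) × (0,1)`, with `u² φ r³` and `log(u²) Φ r³`
integrable there, and `∫∫ log(u²) Φ r³ ≥ 0`, then
`(∫∫ log(u²) Φ r³)² ≤ (8 c₀ π²/3) ∫∫ u² φ r³`. -/
theorem stmt_4 (α : ℝ) (hα : 1 + Real.sqrt (1 + π ^ 2 / 4) ≤ α)
    (u : ℝ × ℝ → ℝ) (hu : Measurable u)
    (hne : ∀ᵐ p ∂(volume.restrict (Set.Ioi (1 : ℝ) ×ˢ Set.Ioo (0 : ℝ) 1)), u p ≠ 0)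
    (hint1 : IntegrableOn
      (fun p : ℝ × ℝ => u p ^ 2 * (Real.exp (-α * p.1 ^ 2) * Real.sin (π * p.2)) * p.1 ^ 3)
      (Set.Ioi (1 : ℝ) ×ˢ Set.Ioo (0 : ℝ) 1) volume)
    (hint2 : IntegrableOn
      (fun p : ℝ × ℝ => Real.log (u p ^ 2) *
        ((4 * α ^ 2 * p.1 ^ 2 - (8 * α + π ^ 2)) * (Real.exp (-α * p.1 ^ 2) * Real.sin (π * p.2)))
        * p.1 ^ 3)
      (Set.Ioi (1 : ℝ) ×ˢ Set.Ioo (0 : ℝ) 1) volume)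
    (hpos : 0 ≤ ∫ p in Set.Ioi (1 : ℝ) ×ˢ Set.Ioo (0 : ℝ) 1,
      Real.log (u p ^ 2) *
        ((4 * α ^ 2 * p.1 ^ 2 - (8 * α + π ^ 2)) * (Real.exp (-α * p.1 ^ 2) * Real.sin (π * p.2)))
        * p.1 ^ 3) :
    (∫ p in Set.Ioi (1 : ℝ) ×ˢ Set.Ioo (0 : ℝ) 1,
      Real.log (u p ^ 2) *
        ((4 * α ^ 2 * p.1 ^ 2 - (8 * α + π ^ 2)) * (Real.exp (-α * p.1 ^ 2) * Real.sin (π * p.2)))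
        * p.1 ^ 3) ^ 2
    ≤ (8 * ((3 / (2 * π ^ 2)) *
          ∫ p in Set.Ioi (1 : ℝ) ×ˢ Set.Ioo (0 : ℝ) 1,
            (4 * α ^ 2 * p.1 ^ 2 - (8 * α + π ^ 2)) ^ 2
              * (Real.exp (-α * p.1 ^ 2) * Real.sin (π * p.2)) * p.1 ^ 3) * π ^ 2 / 3)
        * ∫ p in Set.Ioi (1 : ℝ) ×ˢ Set.Ioo (0 : ℝ) 1,
            u p ^ 2 * (Real.exp (-α * p.1 ^ 2) * Real.sin (π * p.2)) * p.1 ^ 3 := by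

  have hπ := Real.pi_pos
  set S := Set.Ioi (1 : ℝ) ×ˢ Set.Ioo (0 : ℝ) 1 with hSdef
  have hSm : MeasurableSet S := measurableSet_Ioi.prod measurableSet_Ioo
  have h14 : (0:ℝ) ≤ 1 + π ^ 2 / 4 := by positivity
  have hsq : Real.sqrt (1 + π ^ 2 / 4) ^ 2 = 1 + π ^ 2 / 4 := Real.sq_sqrt h14
  have hsnn : 0 ≤ Real.sqrt (1 + π ^ 2 / 4) := Real.sqrt_nonneg _
  have hα1 : 1 ≤ α := by nlinarith
  have hαpos : (0:ℝ) < α := by linarith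
  -- nonnegativity of G on r ≥ 1
  have hGnn : ∀ r : ℝ, 1 ≤ r → 0 ≤ 4 * α ^ 2 * r ^ 2 - (8 * α + π ^ 2) := by
    intro r hr
    nlinarith [sq_nonneg (r - 1), sq_nonneg (α - 1 - Real.sqrt (1 + π ^ 2 / 4))]
  -- nonnegativity of φ-weight on S
  have hφnn : ∀ p : ℝ × ℝ, p ∈ S →
      0 ≤ Real.exp (-α * p.1 ^ 2) * Real.sin (π * p.2) * p.1 ^ 3 := by
    intro p hp
    obtain ⟨hp1, hp2⟩ := hp
    have h1 : (1:ℝ) < p.1 := hp1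
    have hs : 0 ≤ Real.sin (π * p.2) := by
      apply Real.sin_nonneg_of_nonneg_of_le_pi
      · exact le_of_lt (mul_pos hπ hp2.1)
      · nlinarith [hp2.2]
    have hp3 : (0:ℝ) ≤ p.1 ^ 3 := pow_nonneg (by linarith) 3
    exact mul_nonneg (mul_nonneg (Real.exp_pos _).le hs) hp3
  -- integrability of G² φ r³
  have hintA : IntegrableOn
      (fun p : ℝ × ℝ => (4 * α ^ 2 * p.1 ^ 2 - (8 * α + π ^ 2)) ^ 2
        * (Real.exp (-α * p.1 ^ 2) * Real.sin (π * p.2)) * p.1 ^ 3) S volume := by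
    have hg : Integrable (fun r : ℝ =>
        (4 * α ^ 2 * r ^ 2 - (8 * α + π ^ 2)) ^ 2 * Real.exp (-α * r ^ 2) * r ^ 3) := by
      have h7 := (stmt4_intpow hαpos 7).const_mul (16 * α ^ 4)
      have h5 := (stmt4_intpow hαpos 5).const_mul (8 * α ^ 2 * (8 * α + π ^ 2))
      have h3 := (stmt4_intpow hαpos 3).const_mul ((8 * α + π ^ 2) ^ 2)
      have := (h7.sub h5).add h3
      exact this.congr (Filter.Eventually.of_forall fun r => by
        simp only [Pi.add_apply, Pi.sub_apply]; ring)
    have hh : IntegrableOn (fun z : ℝ => Real.sin (π * z)) (Set.Ioo (0:ℝ) 1) := by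
      exact ((Real.continuous_sin.comp (continuous_const.mul continuous_id)).integrableOn_Icc).mono_set
        Set.Ioo_subset_Icc_self
    have hprod : IntegrableOn (fun p : ℝ × ℝ =>
        ((4 * α ^ 2 * p.1 ^ 2 - (8 * α + π ^ 2)) ^ 2 * Real.exp (-α * p.1 ^ 2) * p.1 ^ 3)
          * Real.sin (π * p.2)) S volume := by
      rw [hSdef, IntegrableOn, Measure.volume_eq_prod, ← Measure.prod_restrict]
      exact (hg.restrict (s := Set.Ioi 1)).mul_prod hh
    exact hprod.congr (Filter.Eventually.of_forall fun p => by ring)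
  -- name the three integrals
  set I := ∫ p in S, Real.log (u p ^ 2) *
      ((4 * α ^ 2 * p.1 ^ 2 - (8 * α + π ^ 2)) * (Real.exp (-α * p.1 ^ 2) * Real.sin (π * p.2)))
      * p.1 ^ 3 with hIdef
  set A := ∫ p in S, (4 * α ^ 2 * p.1 ^ 2 - (8 * α + π ^ 2)) ^ 2
      * (Real.exp (-α * p.1 ^ 2) * Real.sin (π * p.2)) * p.1 ^ 3 with hAdef
  set B := ∫ p in S, u p ^ 2 * (Real.exp (-α * p.1 ^ 2) * Real.sin (π * p.2)) * p.1 ^ 3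
    with hBdef
  have hA : 0 ≤ A := by
    apply setIntegral_nonneg hSm
    intro p hp
    have h1 : (1:ℝ) < p.1 := hp.1
    have := hφnn p hp
    nlinarith [sq_nonneg (4 * α ^ 2 * p.1 ^ 2 - (8 * α + π ^ 2))]
  have hB : 0 ≤ B := by
    apply setIntegral_nonneg hSm
    intro p hp
    have := hφnn p hp
    nlinarith [sq_nonneg (u p)]
  -- key inequality: ∀ ε > 0, ε I ≤ ε² B + A
  have key : ∀ ε : ℝ, 0 < ε → ε * I ≤ ε ^ 2 * B + A := by
    intro ε hε
    have hL : Integrable (fun p : ℝ × ℝ => ε * (Real.log (u p ^ 2) *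
        ((4 * α ^ 2 * p.1 ^ 2 - (8 * α + π ^ 2)) * (Real.exp (-α * p.1 ^ 2) * Real.sin (π * p.2)))
        * p.1 ^ 3)) (volume.restrict S) := hint2.const_mul ε
    have hR : Integrable (fun p : ℝ × ℝ =>
        ε ^ 2 * (u p ^ 2 * (Real.exp (-α * p.1 ^ 2) * Real.sin (π * p.2)) * p.1 ^ 3)
        + (4 * α ^ 2 * p.1 ^ 2 - (8 * α + π ^ 2)) ^ 2
          * (Real.exp (-α * p.1 ^ 2) * Real.sin (π * p.2)) * p.1 ^ 3) (volume.restrict S) :=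
      (hint1.const_mul (ε ^ 2)).add hintA
    have hmono : ∀ᵐ p ∂(volume.restrict S), ε * (Real.log (u p ^ 2) *
        ((4 * α ^ 2 * p.1 ^ 2 - (8 * α + π ^ 2)) * (Real.exp (-α * p.1 ^ 2) * Real.sin (π * p.2)))
        * p.1 ^ 3)
        ≤ ε ^ 2 * (u p ^ 2 * (Real.exp (-α * p.1 ^ 2) * Real.sin (π * p.2)) * p.1 ^ 3)
        + (4 * α ^ 2 * p.1 ^ 2 - (8 * α + π ^ 2)) ^ 2
          * (Real.exp (-α * p.1 ^ 2) * Real.sin (π * p.2)) * p.1 ^ 3 := by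
      filter_upwards [hne, ae_restrict_mem hSm] with p hu0 hp
      set G := 4 * α ^ 2 * p.1 ^ 2 - (8 * α + π ^ 2) with hGd
      set w := Real.exp (-α * p.1 ^ 2) * Real.sin (π * p.2) * p.1 ^ 3 with hwd
      have hw : 0 ≤ w := hφnn p hp
      have hG : 0 ≤ G := hGnn p.1 (le_of_lt hp.1)
      have habs : 0 < |u p| := abs_pos.mpr hu0
      have hlog : Real.log (u p ^ 2) ≤ 2 * |u p| := by
        have h1 : Real.log (u p ^ 2) = 2 * Real.log |u p| := by
          rw [← sq_abs, sq, Real.log_mul (ne_of_gt habs) (ne_of_gt habs)]; ring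
        have h2 := Real.log_le_sub_one_of_pos habs
        linarith
      have h3 : Real.log (u p ^ 2) * (G * w) ≤ 2 * |u p| * (G * w) :=
        mul_le_mul_of_nonneg_right hlog (mul_nonneg hG hw)
      have h4 : ε * (Real.log (u p ^ 2) * (G * w)) ≤ ε * (2 * |u p| * (G * w)) :=
        mul_le_mul_of_nonneg_left h3 (le_of_lt hε)
      have h5 : ε * (2 * |u p| * (G * w)) ≤ ε ^ 2 * (u p ^ 2 * w) + G ^ 2 * w := by
        have e1 : ε ^ 2 * (u p ^ 2 * w) + G ^ 2 * w - ε * (2 * |u p| * (G * w))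
            = (ε * |u p| - G) ^ 2 * w := by rw [← sq_abs (u p)]; ring
        linarith [mul_nonneg (sq_nonneg (ε * |u p| - G)) hw]
      calc ε * (Real.log (u p ^ 2) *
          (G * (Real.exp (-α * p.1 ^ 2) * Real.sin (π * p.2))) * p.1 ^ 3)
          = ε * (Real.log (u p ^ 2) * (G * w)) := by rw [hwd]; ring
        _ ≤ ε ^ 2 * (u p ^ 2 * w) + G ^ 2 * w := le_trans h4 h5
        _ = ε ^ 2 * (u p ^ 2 * (Real.exp (-α * p.1 ^ 2) * Real.sin (π * p.2)) * p.1 ^ 3)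
            + G ^ 2 * (Real.exp (-α * p.1 ^ 2) * Real.sin (π * p.2)) * p.1 ^ 3 := by
            rw [hwd]; ring
    calc ε * I = ∫ p in S, ε * (Real.log (u p ^ 2) *
        ((4 * α ^ 2 * p.1 ^ 2 - (8 * α + π ^ 2)) * (Real.exp (-α * p.1 ^ 2) * Real.sin (π * p.2)))
        * p.1 ^ 3) := (integral_const_mul ε _).symm
      _ ≤ ∫ p in S, (ε ^ 2 * (u p ^ 2 * (Real.exp (-α * p.1 ^ 2) * Real.sin (π * p.2)) * p.1 ^ 3)
          + (4 * α ^ 2 * p.1 ^ 2 - (8 * α + π ^ 2)) ^ 2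
            * (Real.exp (-α * p.1 ^ 2) * Real.sin (π * p.2)) * p.1 ^ 3) :=
        integral_mono_ae hL hR hmono
      _ = ε ^ 2 * B + A := by
        rw [integral_add (hint1.const_mul (ε ^ 2)) hintA, integral_const_mul]
  have hmain : I ^ 2 ≤ 4 * A * B := stmt4_quad hpos hA hB key
  have hc : 8 * (3 / (2 * π ^ 2) * A) * π ^ 2 / 3 * B = 4 * A * B := by
    field_simp
    ring
  rw [hc]
  exact hmain
end

section
/- Let c₀ > 0, T ∈ (0,∞], and let Y : [0,T) → ℝ be twice differentiable with Y''(t) ≥ (3/(2c₀)) Y(t)² for all t ∈ [0,T) and Y'(0) > 0. Then Y'(t) > 0 for all t ∈ [0,T), and moreover Y'(t)² ≥ Y'(0)² − Y(0)³/c₀ + Y(t)³/c₀ for all t ∈ [0,T). -/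
/-- If `Y : [0,T) → ℝ` (`T ∈ (0,∞]`) is twice differentiable with
`Y'' ≥ (3/(2c₀)) Y²` and `Y'(0) > 0`, then `Y' > 0` on `[0,T)` and
`Y'(t)² ≥ Y'(0)² − Y(0)³/c₀ + Y(t)³/c₀`. -/
theorem stmt_8 (c₀ : ℝ) (hc₀ : 0 < c₀) (T : EReal) (hT : 0 < T)
    (Y Y' Y'' : ℝ → ℝ)
    (hd1 : ∀ t : ℝ, 0 ≤ t → (t : EReal) < T →
      HasDerivWithinAt Y (Y' t) {s : ℝ | 0 ≤ s ∧ (s : EReal) < T} t)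
    (hd2 : ∀ t : ℝ, 0 ≤ t → (t : EReal) < T →
      HasDerivWithinAt Y' (Y'' t) {s : ℝ | 0 ≤ s ∧ (s : EReal) < T} t)
    (hineq : ∀ t : ℝ, 0 ≤ t → (t : EReal) < T → 3 / (2 * c₀) * Y t ^ 2 ≤ Y'' t)
    (h0 : 0 < Y' 0) :
    ∀ t : ℝ, 0 ≤ t → (t : EReal) < T →
      0 < Y' t ∧ Y' 0 ^ 2 - Y 0 ^ 3 / c₀ + Y t ^ 3 / c₀ ≤ Y' t ^ 2 := by
  intro t ht0 htT
  set S : Set ℝ := {s : ℝ | 0 ≤ s ∧ (s : EReal) < T} with hS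
  have hsubS : Set.Icc 0 t ⊆ S := by
    intro x hx
    exact ⟨hx.1, lt_of_le_of_lt (EReal.coe_le_coe_iff.mpr hx.2) htT⟩
  have hmemS : ∀ x ∈ Set.Icc (0:ℝ) t, 0 ≤ x ∧ (x : EReal) < T := fun x hx => hsubS hx
  have hintsub : interior (Set.Icc (0:ℝ) t) = Set.Ioo 0 t := interior_Icc
  -- derivatives at interior points are full derivatives
  have hnhds : ∀ x ∈ Set.Ioo (0:ℝ) t, S ∈ nhds x := by
    intro x hx
    exact Filter.mem_of_superset (Ioo_mem_nhds hx.1 hx.2)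
      (fun y hy => hsubS ⟨le_of_lt hy.1, le_of_lt hy.2⟩)
  have hd1' : ∀ x ∈ Set.Ioo (0:ℝ) t, HasDerivAt Y (Y' x) x := by
    intro x hx
    have h := hmemS x ⟨le_of_lt hx.1, le_of_lt hx.2⟩
    exact (hd1 x h.1 h.2).hasDerivAt (hnhds x hx)
  have hd2' : ∀ x ∈ Set.Ioo (0:ℝ) t, HasDerivAt Y' (Y'' x) x := by
    intro x hx
    have h := hmemS x ⟨le_of_lt hx.1, le_of_lt hx.2⟩
    exact (hd2 x h.1 h.2).hasDerivAt (hnhds x hx)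
  have hcontY : ContinuousOn Y (Set.Icc 0 t) := fun x hx => by
    have h := hmemS x hx
    exact ((hd1 x h.1 h.2).mono hsubS).continuousWithinAt
  have hcontY' : ContinuousOn Y' (Set.Icc 0 t) := fun x hx => by
    have h := hmemS x hx
    exact ((hd2 x h.1 h.2).mono hsubS).continuousWithinAt
  -- Y'' ≥ 0, so Y' is monotone on [0,t]
  have hY''nonneg : ∀ x ∈ Set.Ioo (0:ℝ) t, 0 ≤ Y'' x := by
    intro x hx
    have h := hmemS x ⟨le_of_lt hx.1, le_of_lt hx.2⟩
    refine le_trans ?_ (hineq x h.1 h.2)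
    positivity
  have hmonoY' : MonotoneOn Y' (Set.Icc 0 t) := by
    apply monotoneOn_of_hasDerivWithinAt_nonneg (convex_Icc 0 t) hcontY'
    · intro x hx
      rw [hintsub] at hx ⊢
      exact (hd2' x hx).hasDerivWithinAt
    · intro x hx
      rw [hintsub] at hx
      exact hY''nonneg x hx
  have hY'pos : ∀ x ∈ Set.Icc (0:ℝ) t, 0 < Y' x := by
    intro x hx
    exact lt_of_lt_of_le h0 (hmonoY' (Set.left_mem_Icc.mpr ht0) hx hx.1)
  -- energy function
  set E : ℝ → ℝ := fun x => Y' x ^ 2 - Y x ^ 3 / c₀ with hE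
  have hcontE : ContinuousOn E (Set.Icc 0 t) := by
    apply (hcontY'.pow 2).sub ((hcontY.pow 3).div_const c₀)
  have hdE : ∀ x ∈ Set.Ioo (0:ℝ) t,
      HasDerivAt E (2 * Y' x * Y'' x - 3 * Y x ^ 2 * Y' x / c₀) x := by
    intro x hx
    have h1 := (hd2' x hx).pow 2
    have h2 := ((hd1' x hx).pow 3).div_const c₀
    have := h1.sub h2
    convert this using 1
    · rfl
    · rfl
    · funext y; simp [hE]
    · norm_num
  have hmonoE : MonotoneOn E (Set.Icc 0 t) := by
    apply monotoneOn_of_hasDerivWithinAt_nonneg (convex_Icc 0 t) hcontE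
      (f' := fun x => 2 * Y' x * Y'' x - 3 * Y x ^ 2 * Y' x / c₀)
    · intro x hx
      rw [hintsub] at hx ⊢
      exact (hdE x hx).hasDerivWithinAt
    · intro x hx
      rw [hintsub] at hx
      have h := hmemS x ⟨le_of_lt hx.1, le_of_lt hx.2⟩
      have hY' := hY'pos x ⟨le_of_lt hx.1, le_of_lt hx.2⟩
      have hi := hineq x h.1 h.2
      have key : 2 * Y' x * (3 / (2 * c₀) * Y x ^ 2) ≤ 2 * Y' x * Y'' x :=
        mul_le_mul_of_nonneg_left hi (by positivity)
      have heq : 2 * Y' x * (3 / (2 * c₀) * Y x ^ 2) = 3 * Y x ^ 2 * Y' x / c₀ := by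
        field_simp
    
      linarith [heq ▸ key]
  have hmem0 : (0:ℝ) ∈ Set.Icc (0:ℝ) t := Set.left_mem_Icc.mpr ht0
  have hmemt : t ∈ Set.Icc (0:ℝ) t := Set.right_mem_Icc.mpr ht0
  have hEineq : E 0 ≤ E t := hmonoE hmem0 hmemt ht0
  refine ⟨hY'pos t hmemt, ?_⟩
  simp only [hE] at hEineq
  linarith
end

section
/- Let c₀ > 0, T ∈ (0,∞], and let Y : [0,T) → ℝ be differentiable with Y(0) > 0, Y'(t) > 0 for all t ∈ [0,T), and Y'(t)² ≥ Y(t)³/c₀ for all t ∈ [0,T). Then Y(t) > 0 for all t ∈ [0,T), and for every t ∈ [0,T) with t < 2√c₀/√(Y(0)), one has Y(t) ≥ 4 c₀ Y(0) / (2√c₀ − t √(Y(0)))². -/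
/-- If `Y : [0,T) → ℝ` (`T ∈ (0,∞]`) is differentiable with `Y(0) > 0`,
`Y' > 0` and `Y'² ≥ Y³/c₀` on `[0,T)`, then `Y > 0` on `[0,T)` and for every
`t ∈ [0,T)` with `t < 2√c₀/√(Y(0))` one has `Y(t) ≥ 4c₀ Y(0) / (2√c₀ − t√(Y(0)))²`. -/
theorem stmt_9 (c₀ : ℝ) (hc₀ : 0 < c₀) (T : EReal) (hT : 0 < T)
    (Y Y' : ℝ → ℝ)
    (hd : ∀ t : ℝ, 0 ≤ t → (t : EReal) < T →
      HasDerivWithinAt Y (Y' t) {s : ℝ | 0 ≤ s ∧ (s : EReal) < T} t)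
    (hY0 : 0 < Y 0)
    (hd_pos : ∀ t : ℝ, 0 ≤ t → (t : EReal) < T → 0 < Y' t)
    (hineq : ∀ t : ℝ, 0 ≤ t → (t : EReal) < T → Y t ^ 3 / c₀ ≤ Y' t ^ 2) :
    ∀ t : ℝ, 0 ≤ t → (t : EReal) < T →
      0 < Y t ∧
      (t < 2 * Real.sqrt c₀ / Real.sqrt (Y 0) →
        4 * c₀ * Y 0 / (2 * Real.sqrt c₀ - t * Real.sqrt (Y 0)) ^ 2 ≤ Y t) := by
  intro t ht0 htT
  set S : Set ℝ := {s : ℝ | 0 ≤ s ∧ (s : EReal) < T} with hS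
  -- Icc 0 t ⊆ S
  have hsub : Set.Icc 0 t ⊆ S := by
    intro s hs
    exact ⟨hs.1, lt_of_le_of_lt (EReal.coe_le_coe_iff.mpr hs.2) htT⟩
  have hmemS : ∀ s ∈ Set.Icc (0:ℝ) t, 0 ≤ s ∧ (s : EReal) < T := fun s hs => hsub hs
  -- continuity of Y on Icc 0 t
  have hcont : ContinuousOn Y (Set.Icc 0 t) := fun s hs =>
    ((hd s (hmemS s hs).1 (hmemS s hs).2).continuousWithinAt).mono hsub
  -- at interior points, Y has honest derivative Y'
  have hda : ∀ x ∈ Set.Ioo (0:ℝ) t, HasDerivAt Y (Y' x) x := by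
    intro x hx
    have hxS : 0 ≤ x ∧ (x : EReal) < T := hmemS x ⟨hx.1.le, hx.2.le⟩
    refine (hd x hxS.1 hxS.2).hasDerivAt ?_
    refine mem_nhds_iff.mpr ⟨Set.Ioo 0 t, ?_, isOpen_Ioo, hx⟩
    intro s hs
    exact hsub ⟨hs.1.le, hs.2.le⟩
  -- Y is monotone on Icc 0 t
  have hmono : MonotoneOn Y (Set.Icc 0 t) := by
    apply monotoneOn_of_deriv_nonneg (convex_Icc 0 t) hcont
    · intro x hx
      rw [interior_Icc] at hx
      exact (hda x hx).differentiableAt.differentiableWithinAt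
    · intro x hx
      rw [interior_Icc] at hx
      have hxS := hmemS x ⟨hx.1.le, hx.2.le⟩
      rw [(hda x hx).deriv]
      exact (hd_pos x hxS.1 hxS.2).le
  have hYpos : ∀ s ∈ Set.Icc (0:ℝ) t, 0 < Y s := by
    intro s hs
    exact lt_of_lt_of_le hY0 (hmono (Set.left_mem_Icc.mpr ht0) hs hs.1)
  have hYtpos : 0 < Y t := hYpos t (Set.right_mem_Icc.mpr ht0)
  refine ⟨hYtpos, ?_⟩
  intro hlt
  set a := Real.sqrt c₀ with ha_def
  set b := Real.sqrt (Y 0) with hb_def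
  have ha : 0 < a := Real.sqrt_pos.mpr hc₀
  have hb : 0 < b := Real.sqrt_pos.mpr hY0
  have ha2 : a ^ 2 = c₀ := Real.sq_sqrt hc₀.le
  have hb2 : b ^ 2 = Y 0 := Real.sq_sqrt hY0.le
  -- the comparison function
  set G : ℝ → ℝ := fun s => (Real.sqrt (Y s))⁻¹ + s / (2 * a) with hG_def
  have hGcont : ContinuousOn G (Set.Icc 0 t) := by
    apply ContinuousOn.add
    · exact (hcont.sqrt).inv₀ fun s hs => (Real.sqrt_pos.mpr (hYpos s hs)).ne'
    · exact (continuousOn_id.div_const _)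
  have hGda : ∀ x ∈ Set.Ioo (0:ℝ) t,
      HasDerivAt G (-(Y' x / (2 * Real.sqrt (Y x))) / Real.sqrt (Y x) ^ 2 + 1 / (2 * a)) x := by
    intro x hx
    have hYx : 0 < Y x := hYpos x ⟨hx.1.le, hx.2.le⟩
    have h1 : HasDerivAt (fun s => Real.sqrt (Y s)) (Y' x / (2 * Real.sqrt (Y x))) x :=
      (hda x hx).sqrt hYx.ne'
    have h2 : HasDerivAt (fun s => (Real.sqrt (Y s))⁻¹)
        (-(Y' x / (2 * Real.sqrt (Y x))) / Real.sqrt (Y x) ^ 2) x :=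
      h1.inv (Real.sqrt_pos.mpr hYx).ne'
    have h3 : HasDerivAt (fun s : ℝ => s / (2 * a)) (1 / (2 * a)) x := by
      simpa using (hasDerivAt_id x).div_const (2 * a)
    exact h2.add h3
  -- G' ≤ 0 on the interior
  have hGderiv : ∀ x ∈ Set.Ioo (0:ℝ) t,
      -(Y' x / (2 * Real.sqrt (Y x))) / Real.sqrt (Y x) ^ 2 + 1 / (2 * a) ≤ 0 := by
    intro x hx
    have hxS := hmemS x ⟨hx.1.le, hx.2.le⟩
    have hYx : 0 < Y x := hYpos x ⟨hx.1.le, hx.2.le⟩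
    have hY'x : 0 < Y' x := hd_pos x hxS.1 hxS.2
    set sx := Real.sqrt (Y x) with hsx_def
    have hsx : 0 < sx := Real.sqrt_pos.mpr hYx
    have hsx2 : sx ^ 2 = Y x := Real.sq_sqrt hYx.le
    have hin : Y x ^ 3 ≤ c₀ * Y' x ^ 2 := by
      have := hineq x hxS.1 hxS.2
      rw [div_le_iff₀ hc₀] at this
      linarith [this]
    have hsq : (Y x * sx) ^ 2 ≤ (a * Y' x) ^ 2 := by
      nlinarith [hin, hsx2, ha2, sq_nonneg (Y x), sq_nonneg (Y' x)]
    have key : Y x * sx ≤ a * Y' x := by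
      have h := Real.sqrt_le_sqrt hsq
      rwa [Real.sqrt_sq (by positivity), Real.sqrt_sq (by positivity)] at h
    have hstep : (1:ℝ) / (2 * a) ≤ (Y' x / (2 * sx)) / sx ^ 2 := by
      rw [div_div, div_le_div_iff₀ (by positivity) (by positivity)]
      nlinarith [key, hsx2, hsx]
    rw [neg_div]
    linarith [hstep]
  have hant : AntitoneOn G (Set.Icc 0 t) := by
    apply antitoneOn_of_deriv_nonpos (convex_Icc 0 t) hGcont
    · intro x hx
      rw [interior_Icc] at hx
      exact (hGda x hx).differentiableAt.differentiableWithinAt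
    · intro x hx
      rw [interior_Icc] at hx
      rw [(hGda x hx).deriv]
      exact hGderiv x hx
  have hGle : G t ≤ G 0 :=
    hant (Set.left_mem_Icc.mpr ht0) (Set.right_mem_Icc.mpr ht0) ht0
  have hG0 : G 0 = b⁻¹ := by simp [hG_def, hb_def]
  set st := Real.sqrt (Y t) with hst_def
  have hst : 0 < st := Real.sqrt_pos.mpr hYtpos
  have hst2 : st ^ 2 = Y t := Real.sq_sqrt hYtpos.le
  have h1 : st⁻¹ + t / (2 * a) ≤ b⁻¹ := by
    rw [hG0] at hGle; exact hGle
  set d := 2 * a - t * b with hd_def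
  have hd_pos' : 0 < d := by
    have : t * b < 2 * a := (lt_div_iff₀ hb).mp hlt
    linarith
  have h2 : st⁻¹ ≤ d / (2 * a * b) := by
    have heq : b⁻¹ - t / (2 * a) = d / (2 * a * b) := by
      field_simp [hd_def]; ring
    linarith [h1, heq.symm.le, heq.le]
  have h3 : 2 * a * b ≤ d * st := by
    rw [inv_eq_one_div, div_le_div_iff₀ hst (by positivity)] at h2
    linarith [h2]
  rw [div_le_iff₀ (by positivity : (0:ℝ) < d ^ 2)]
  nlinarith [mul_self_le_mul_self (by positivity : (0:ℝ) ≤ 2 * a * b) h3, ha2, hb2, hst2,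
    hd_pos', hst]
end

section
/- Let c₀ > 0. There is no twice differentiable function Y : [0,∞) → ℝ satisfying simultaneously: Y(0) > 0, Y'(0) > 0, Y'(0)² ≥ Y(0)³/c₀, and Y''(t) ≥ (3/(2c₀)) Y(t)² for all t ≥ 0. Equivalently, any twice differentiable Y defined on an interval [0,T) satisfying these conditions must have T ≤ 2√c₀/√(Y(0)). -/
/-- For `c₀ > 0`, there is no twice differentiable `Y : [0,∞) → ℝ` with
`Y(0) > 0`, `Y'(0) > 0`, `Y'(0)² ≥ Y(0)³/c₀` and `Y''(t) ≥ (3/(2c₀)) Y(t)²` for all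
`t ≥ 0`. -/
theorem stmt_10 (c₀ : ℝ) (hc₀ : 0 < c₀) :
    ¬ ∃ Y Y' Y'' : ℝ → ℝ,
      (∀ t : ℝ, 0 ≤ t → HasDerivWithinAt Y (Y' t) (Set.Ici (0 : ℝ)) t) ∧
      (∀ t : ℝ, 0 ≤ t → HasDerivWithinAt Y' (Y'' t) (Set.Ici (0 : ℝ)) t) ∧
      0 < Y 0 ∧ 0 < Y' 0 ∧ Y 0 ^ 3 / c₀ ≤ Y' 0 ^ 2 ∧
      (∀ t : ℝ, 0 ≤ t → 3 / (2 * c₀) * Y t ^ 2 ≤ Y'' t) := by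
  rintro ⟨Y, Y', Y'', hY, hY', ha, hb, hE0, hODE⟩
  have hconv : Convex ℝ (Set.Ici (0:ℝ)) := convex_Ici 0
  have hint : interior (Set.Ici (0:ℝ)) = Set.Ioi 0 := interior_Ici
  have hYc : ContinuousOn Y (Set.Ici 0) := fun t ht => (hY t ht).continuousWithinAt
  have hY'c : ContinuousOn Y' (Set.Ici 0) := fun t ht => (hY' t ht).continuousWithinAt
  -- Y' is monotone since Y'' ≥ 0
  have hY'mono : MonotoneOn Y' (Set.Ici 0) := by
    apply monotoneOn_of_hasDerivWithinAt_nonneg hconv hY'c (f' := Y'')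
    · intro x hx; rw [hint] at hx ⊢
      exact (hY' x hx.le).mono Set.Ioi_subset_Ici_self
    · intro x hx; rw [hint] at hx
      exact le_trans (by positivity) (hODE x hx.le)
  have hY'pos : ∀ t, 0 ≤ t → 0 < Y' t := fun t ht =>
    lt_of_lt_of_le hb (hY'mono Set.self_mem_Ici ht ht)
  -- Y is monotone, hence positive
  have hYmono : MonotoneOn Y (Set.Ici 0) := by
    apply monotoneOn_of_hasDerivWithinAt_nonneg hconv hYc (f' := Y')
    · intro x hx; rw [hint] at hx ⊢
      exact (hY x hx.le).mono Set.Ioi_subset_Ici_self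
    · intro x hx; rw [hint] at hx
      exact (hY'pos x hx.le).le
  have hYpos : ∀ t, 0 ≤ t → 0 < Y t := fun t ht =>
    lt_of_lt_of_le ha (hYmono Set.self_mem_Ici ht ht)
  -- energy E = Y'^2 - Y^3/c₀ is monotone
  have hEmono : MonotoneOn (fun t => Y' t ^ 2 - Y t ^ 3 / c₀) (Set.Ici 0) := by
    apply monotoneOn_of_hasDerivWithinAt_nonneg hconv
      ((hY'c.pow 2).sub ((hYc.pow 3).div_const c₀))
      (f' := fun x => 2 * Y' x * Y'' x - 3 * Y x ^ 2 * Y' x / c₀)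
    · intro x hx; rw [hint] at hx ⊢
      have h1 := (((hY' x hx.le).mono Set.Ioi_subset_Ici_self).pow 2).sub
        ((((hY x hx.le).mono Set.Ioi_subset_Ici_self).pow 3).div_const c₀)
      refine h1.congr_deriv ?_
      push_cast
      ring
    · intro x hx; rw [hint] at hx
      have h := hODE x hx.le
      rw [div_mul_eq_mul_div, div_le_iff₀ (by positivity)] at h
      rw [sub_nonneg, div_le_iff₀ hc₀]
      nlinarith [mul_le_mul_of_nonneg_left h (hY'pos x hx.le).le]
  have hE : ∀ t, 0 ≤ t → Y t ^ 3 / c₀ ≤ Y' t ^ 2 := by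
    intro t ht
    have := hEmono Set.self_mem_Ici ht ht
    simp only at this
    linarith
  -- key pointwise inequality: Y * √Y ≤ √c₀ * Y'
  have key : ∀ t, 0 ≤ t → Y t * Real.sqrt (Y t) ≤ Real.sqrt c₀ * Y' t := by
    intro t ht
    have h1 : Y t ^ 3 ≤ c₀ * Y' t ^ 2 := by
      have := hE t ht
      rw [div_le_iff₀ hc₀] at this
      linarith
    have h2 : (Y t * Real.sqrt (Y t)) ^ 2 ≤ (Real.sqrt c₀ * Y' t) ^ 2 := by
      have hYt := (hYpos t ht).le
      have e1 : (Y t * Real.sqrt (Y t)) ^ 2 = Y t ^ 3 := by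
        rw [mul_pow, Real.sq_sqrt hYt]; ring
      have e2 : (Real.sqrt c₀ * Y' t) ^ 2 = c₀ * Y' t ^ 2 := by
        rw [mul_pow, Real.sq_sqrt hc₀.le]
      rw [e1, e2]; exact h1
    have h3 := Real.sqrt_le_sqrt h2
    rwa [Real.sqrt_sq (mul_nonneg (hYpos t ht).le (Real.sqrt_nonneg _)),
      Real.sqrt_sq (mul_nonneg (Real.sqrt_nonneg _) (hY'pos t ht).le)] at h3
  -- F = (√Y)⁻¹ + t/(2√c₀) is antitone
  set F : ℝ → ℝ := fun t => (Real.sqrt (Y t))⁻¹ + t / (2 * Real.sqrt c₀) with hF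
  have hsc : 0 < Real.sqrt c₀ := Real.sqrt_pos.mpr hc₀
  have hFanti : AntitoneOn F (Set.Ici 0) := by
    apply antitoneOn_of_hasDerivWithinAt_nonpos hconv
      (f' := fun x => -(1 / (2 * Real.sqrt (Y x)) * Y' x) / (Real.sqrt (Y x)) ^ 2
        + 1 / (2 * Real.sqrt c₀))
    · apply ContinuousOn.add
      · exact (hYc.sqrt.inv₀ (fun t ht => (Real.sqrt_pos.mpr (hYpos t ht)).ne'))
      · exact (continuous_id.div_const _).continuousOn
    · intro x hx; rw [hint] at hx ⊢
      have hYx := hYpos x hx.le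
      have hd1 : HasDerivWithinAt (fun t => Real.sqrt (Y t))
          (1 / (2 * Real.sqrt (Y x)) * Y' x) (Set.Ioi 0) x :=
        (Real.hasDerivAt_sqrt hYx.ne').comp_hasDerivWithinAt x
          ((hY x hx.le).mono Set.Ioi_subset_Ici_self)
      have hd2 := hd1.inv (Real.sqrt_pos.mpr hYx).ne'
      exact hd2.add ((hasDerivWithinAt_id x _).div_const (2 * Real.sqrt c₀))
    · intro x hx; rw [hint] at hx
      have hYx := hYpos x hx.le
      set u := Real.sqrt (Y x) with hu
      have hupos : 0 < u := Real.sqrt_pos.mpr hYx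
      have hu2 : u ^ 2 = Y x := Real.sq_sqrt hYx.le
      have hk := key x hx.le
      have e : -(1 / (2 * u) * Y' x) / u ^ 2 + 1 / (2 * Real.sqrt c₀)
          = 1 / (2 * Real.sqrt c₀) - Y' x / (2 * u ^ 3) := by
        field_simp
        ring
      rw [e, sub_nonpos, div_le_div_iff₀ (by positivity) (by positivity)]
      nlinarith [hk, hu2, hupos, hsc, (hY'pos x hx.le)]
  -- final contradiction at T = 2√c₀/√(Y 0) + 2√c₀
  set T : ℝ := 2 * Real.sqrt c₀ / Real.sqrt (Y 0) + 2 * Real.sqrt c₀ with hT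
  have hsY0 : 0 < Real.sqrt (Y 0) := Real.sqrt_pos.mpr ha
  have hT0 : (0:ℝ) ≤ T := by positivity
  have hFT : F T ≤ F 0 := hFanti Set.self_mem_Ici hT0 hT0
  have hFTpos : 0 < (Real.sqrt (Y T))⁻¹ :=
    inv_pos.mpr (Real.sqrt_pos.mpr (hYpos T hT0))
  have eT : T / (2 * Real.sqrt c₀) = (Real.sqrt (Y 0))⁻¹ + 1 := by
    rw [hT]
    field_simp
  have hF0 : F 0 = (Real.sqrt (Y 0))⁻¹ := by
    simp [hF]
  have hFTval : F T = (Real.sqrt (Y T))⁻¹ + ((Real.sqrt (Y 0))⁻¹ + 1) := by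
    rw [hF]; simp only []; rw [eT]
  rw [hF0, hFTval] at hFT
  linarith
end

section
/- Let c₀ > 0 and T ∈ (0,∞]. Suppose A, B : [0,T) → ℝ are differentiable and satisfy: B'(t) = 4 A(t) for all t ∈ [0,T); A'(t) ≥ 0 for all t ∈ [0,T); A'(t) ≥ (3/(8c₀)) B(t)² for all t ∈ [0,T) with B(t) ≥ 0; A(0) > 0; B(0) > 0; and 16 A(0)² ≥ B(0)³/c₀. Then T ≤ 2√c₀/√(B(0)); in particular, A and B cannot both be defined and differentiable on all of [0,∞). -/
/-- Let `c₀ > 0`, `T ∈ (0,∞]` and `A, B : [0,T) → ℝ` differentiable with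
`B' = 4A`, `A' ≥ 0`, `A' ≥ (3/(8c₀)) B²` whenever `B ≥ 0`, `A(0) > 0`, `B(0) > 0`, and
`16 A(0)² ≥ B(0)³/c₀`. Then `T ≤ 2√c₀/√(B(0))`. -/
theorem stmt_11 (c₀ : ℝ) (hc₀ : 0 < c₀) (T : EReal) (hT : 0 < T)
    (A B A' : ℝ → ℝ)
    (hB : ∀ t : ℝ, 0 ≤ t → (t : EReal) < T →
      HasDerivWithinAt B (4 * A t) {s : ℝ | 0 ≤ s ∧ (s : EReal) < T} t)
    (hA : ∀ t : ℝ, 0 ≤ t → (t : EReal) < T →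
      HasDerivWithinAt A (A' t) {s : ℝ | 0 ≤ s ∧ (s : EReal) < T} t)
    (hA'nonneg : ∀ t : ℝ, 0 ≤ t → (t : EReal) < T → 0 ≤ A' t)
    (hA'ineq : ∀ t : ℝ, 0 ≤ t → (t : EReal) < T → 0 ≤ B t →
      3 / (8 * c₀) * B t ^ 2 ≤ A' t)
    (hA0 : 0 < A 0) (hB0 : 0 < B 0)
    (hinit : B 0 ^ 3 / c₀ ≤ 16 * A 0 ^ 2) :
    T ≤ ((2 * Real.sqrt c₀ / Real.sqrt (B 0) : ℝ) : EReal) := by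
  set K : ℝ := 2 * Real.sqrt c₀ / Real.sqrt (B 0) with hKdef
  have hsc₀ : 0 < Real.sqrt c₀ := Real.sqrt_pos.2 hc₀
  have hsB0 : 0 < Real.sqrt (B 0) := Real.sqrt_pos.2 hB0
  have hKpos : 0 < K := by positivity
  have main : ∀ t : ℝ, 0 ≤ t → (t : EReal) < T → t < K := by
    intro t ht0 htT
    rcases eq_or_lt_of_le ht0 with rfl | htpos
    · exact hKpos
    have hsub : Set.Icc (0:ℝ) t ⊆ {s : ℝ | 0 ≤ s ∧ (s : EReal) < T} := by
      intro s hs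
      exact ⟨hs.1, lt_of_le_of_lt (EReal.coe_le_coe_iff.2 hs.2) htT⟩
    have hmem : ∀ s ∈ Set.Icc (0:ℝ) t, 0 ≤ s ∧ (s : EReal) < T := fun s hs => hsub hs
    have hIoo : Set.Ioo (0:ℝ) t ⊆ Set.Icc (0:ℝ) t := Set.Ioo_subset_Icc_self
    have hmemI : ∀ s ∈ Set.Ioo (0:ℝ) t, 0 ≤ s ∧ (s : EReal) < T := fun s hs => hmem s (hIoo hs)
    have h0mem : (0:ℝ) ∈ Set.Icc (0:ℝ) t := Set.left_mem_Icc.2 ht0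
    have htmem : t ∈ Set.Icc (0:ℝ) t := Set.right_mem_Icc.2 ht0
    -- derivatives within Icc / Ioo
    have hA' : ∀ s ∈ Set.Icc (0:ℝ) t, HasDerivWithinAt A (A' s) (Set.Icc (0:ℝ) t) s :=
      fun s hs => (hA s (hmem s hs).1 (hmem s hs).2).mono hsub
    have hB' : ∀ s ∈ Set.Icc (0:ℝ) t, HasDerivWithinAt B (4 * A s) (Set.Icc (0:ℝ) t) s :=
      fun s hs => (hB s (hmem s hs).1 (hmem s hs).2).mono hsub
    have hAint : ∀ s ∈ Set.Ioo (0:ℝ) t, HasDerivWithinAt A (A' s) (Set.Ioo (0:ℝ) t) s :=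
      fun s hs => (hA' s (hIoo hs)).mono hIoo
    have hBint : ∀ s ∈ Set.Ioo (0:ℝ) t, HasDerivWithinAt B (4 * A s) (Set.Ioo (0:ℝ) t) s :=
      fun s hs => (hB' s (hIoo hs)).mono hIoo
    have hcontA : ContinuousOn A (Set.Icc (0:ℝ) t) := fun s hs => (hA' s hs).continuousWithinAt
    have hcontB : ContinuousOn B (Set.Icc (0:ℝ) t) := fun s hs => (hB' s hs).continuousWithinAt
    -- A is monotone, hence positive
    have hmonoA : MonotoneOn A (Set.Icc (0:ℝ) t) := by
      apply monotoneOn_of_hasDerivWithinAt_nonneg (convex_Icc 0 t) hcontA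
      · intro x hx; rw [interior_Icc] at hx ⊢; exact hAint x hx
      · intro x hx; rw [interior_Icc] at hx
        exact hA'nonneg x (hmemI x hx).1 (hmemI x hx).2
    have hApos : ∀ s ∈ Set.Icc (0:ℝ) t, 0 < A s :=
      fun s hs => lt_of_lt_of_le hA0 (hmonoA h0mem hs hs.1)
    -- B is monotone, hence positive
    have hmonoB : MonotoneOn B (Set.Icc (0:ℝ) t) := by
      apply monotoneOn_of_hasDerivWithinAt_nonneg (convex_Icc 0 t) hcontB
        (f' := fun s => 4 * A s)
      · intro x hx; rw [interior_Icc] at hx ⊢; exact hBint x hx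
      · intro x hx; rw [interior_Icc] at hx
        have := hApos x (hIoo hx); linarith
    have hBpos : ∀ s ∈ Set.Icc (0:ℝ) t, 0 < B s :=
      fun s hs => lt_of_lt_of_le hB0 (hmonoB h0mem hs hs.1)
    -- energy function g = A² - B³/(16 c₀) is monotone
    have hmonog : MonotoneOn (fun s => A s ^ 2 - B s ^ 3 / (16 * c₀)) (Set.Icc (0:ℝ) t) := by
      apply monotoneOn_of_hasDerivWithinAt_nonneg (convex_Icc 0 t)
        (f' := fun x => 2 * A x ^ 1 * A' x - 3 * B x ^ 2 * (4 * A x) / (16 * c₀))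
      · exact (hcontA.pow 2).sub ((hcontB.pow 3).div_const _)
      · intro x hx; rw [interior_Icc] at hx ⊢
        exact ((hAint x hx).pow 2).sub (((hBint x hx).pow 3).div_const _)
      · intro x hx; rw [interior_Icc] at hx
        have h1 : 0 < A x := hApos x (hIoo hx)
        have h2 : 0 < B x := hBpos x (hIoo hx)
        have h3 := hA'ineq x (hmemI x hx).1 (hmemI x hx).2 h2.le
        have heq : 2 * A x ^ 1 * A' x - 3 * B x ^ 2 * (4 * A x) / (16 * c₀)
            = 2 * A x * (A' x - 3 / (8 * c₀) * B x ^ 2) := by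
          field_simp; ring
        rw [heq]
        have : 0 ≤ A' x - 3 / (8 * c₀) * B x ^ 2 := by linarith
        positivity
    have hg0 : 0 ≤ A 0 ^ 2 - B 0 ^ 3 / (16 * c₀) := by
      have : B 0 ^ 3 / (16 * c₀) = (B 0 ^ 3 / c₀) / 16 := by ring
      linarith
    have hgs : ∀ s ∈ Set.Icc (0:ℝ) t, B s ^ 3 ≤ 16 * c₀ * A s ^ 2 := by
      intro s hs
      have := hmonog h0mem hs hs.1
      simp only at this
      have h16 : (0:ℝ) < 16 * c₀ := by positivity
      have h2 : B s ^ 3 / (16 * c₀) ≤ A s ^ 2 := by linarith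
      rw [div_le_iff₀ h16] at h2
      linarith
    -- key pointwise bound: B√B ≤ 4 √c₀ A
    have hkey : ∀ s ∈ Set.Icc (0:ℝ) t, B s * Real.sqrt (B s) ≤ 4 * Real.sqrt c₀ * A s := by
      intro s hs
      have hBs := hBpos s hs
      have hAs := hApos s hs
      have hsq1 : (B s * Real.sqrt (B s)) ^ 2 = B s ^ 3 := by
        rw [mul_pow, Real.sq_sqrt hBs.le]; ring
      have hsq2 : (4 * Real.sqrt c₀ * A s) ^ 2 = 16 * c₀ * A s ^ 2 := by
        rw [mul_pow, mul_pow, Real.sq_sqrt hc₀.le]; ring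
      have h1 : (B s * Real.sqrt (B s)) ^ 2 ≤ (4 * Real.sqrt c₀ * A s) ^ 2 := by
        rw [hsq1, hsq2]; exact hgs s hs
      calc B s * Real.sqrt (B s) = Real.sqrt ((B s * Real.sqrt (B s)) ^ 2) := by
            rw [Real.sqrt_sq (by positivity)]
        _ ≤ Real.sqrt ((4 * Real.sqrt c₀ * A s) ^ 2) := Real.sqrt_le_sqrt h1
        _ = 4 * Real.sqrt c₀ * A s := Real.sqrt_sq (by positivity)
    -- h = 1/√B + s/(2√c₀) is antitone
    have hantih : AntitoneOn (fun s => (Real.sqrt (B s))⁻¹ + s / (2 * Real.sqrt c₀))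
        (Set.Icc (0:ℝ) t) := by
      apply antitoneOn_of_hasDerivWithinAt_nonpos (convex_Icc 0 t)
        (f' := fun x => -(1 / (2 * Real.sqrt (B x)) * (4 * A x)) / (Real.sqrt (B x)) ^ 2
                + 1 / (2 * Real.sqrt c₀))
      · apply ContinuousOn.add
        · apply ContinuousOn.inv₀ (Real.continuous_sqrt.comp_continuousOn hcontB)
          intro s hs
          exact (Real.sqrt_pos.2 (hBpos s hs)).ne'
        · exact continuousOn_id.div_const _
      · intro x hx; rw [interior_Icc] at hx ⊢
        have hBx : 0 < B x := hBpos x (hIoo hx)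
        have hsq : HasDerivWithinAt (fun s => Real.sqrt (B s))
            (1 / (2 * Real.sqrt (B x)) * (4 * A x)) (Set.Ioo 0 t) x :=
          (Real.hasDerivAt_sqrt hBx.ne').comp_hasDerivWithinAt x (hBint x hx)
        have hinv := hsq.inv (Real.sqrt_pos.2 hBx).ne'
        exact hinv.add ((hasDerivWithinAt_id x _).div_const (2 * Real.sqrt c₀))
      · intro x hx; rw [interior_Icc] at hx
        have hBx : 0 < B x := hBpos x (hIoo hx)
        have hAx : 0 < A x := hApos x (hIoo hx)
        have hsb : 0 < Real.sqrt (B x) := Real.sqrt_pos.2 hBx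
        have hBeq : B x = Real.sqrt (B x) ^ 2 := (Real.sq_sqrt hBx.le).symm
        have hk : B x * Real.sqrt (B x) ≤ 4 * Real.sqrt c₀ * A x := hkey x (hIoo hx)
        set b := Real.sqrt (B x) with hb
        have hk' : b ^ 3 ≤ 4 * Real.sqrt c₀ * A x := by
          calc b ^ 3 = B x * b := by rw [hBeq]; ring
            _ ≤ _ := hk
        have heq : -(1 / (2 * b) * (4 * A x)) / b ^ 2 + 1 / (2 * Real.sqrt c₀)
            = (b ^ 3 - 4 * Real.sqrt c₀ * A x) / (2 * Real.sqrt c₀ * b ^ 3) := by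
          field_simp
          ring
        rw [heq]
        apply div_nonpos_of_nonpos_of_nonneg
        · linarith
        · positivity
    -- conclude
    have hle := hantih h0mem htmem ht0
    simp only at hle
    have hBt : 0 < B t := hBpos t htmem
    have hinvt : 0 < (Real.sqrt (B t))⁻¹ := by positivity
    have ht' : t / (2 * Real.sqrt c₀) < (Real.sqrt (B 0))⁻¹ := by
      have : (0:ℝ) / (2 * Real.sqrt c₀) = 0 := by simp
      nlinarith [hle]
    rw [div_lt_iff₀ (by positivity)] at ht'
    have : t < 2 * Real.sqrt c₀ / Real.sqrt (B 0) := by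
      rw [div_eq_mul_inv]; linarith [ht']
    exact this
  by_contra hcon
  push_neg at hcon
  exact absurd (main K hKpos.le hcon) (lt_irrefl K)
end

section
/- Let M > 0 and C > 0. Suppose U, V : [0,∞) → ℝ are differentiable, U(t) ≥ 0 and V(t) ≥ 0 for all t ≥ 0, and they satisfy the differential inequalities U'(t) ≤ (−4M + 4C² V(t)) U(t) and V'(t) ≤ C U(t) for all t ≥ 0, together with the initial bounds U(0) ≤ M²/(4C³) and V(0) ≤ M/(8C²). Then for every t ≥ 0: U(t) ≤ U(0) e^{−2Mt} and V(t) ≤ V(0) + (C/(2M)) U(0) ≤ M/(4C²). -/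

lemma decr_aux (f f' : ℝ → ℝ) (b : ℝ) (hb : 0 ≤ b)
    (hf : ∀ t : ℝ, 0 ≤ t → HasDerivWithinAt f (f' t) (Set.Ici 0) t)
    (hle : ∀ t : ℝ, 0 < t → t ≤ b → f' t ≤ 0) : f b ≤ f 0 := by
  rcases eq_or_lt_of_le hb with h | h
  · rw [← h]
  have hcont : ContinuousOn f (Set.Icc 0 b) := fun t ht =>
    ((hf t ht.1).continuousWithinAt).mono Set.Icc_subset_Ici_self
  have hderiv : ∀ t ∈ Set.Ioo (0:ℝ) b, HasDerivAt f (f' t) t := fun t ht =>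
    (hf t ht.1.le).hasDerivAt (Ici_mem_nhds ht.1)
  have hanti : AntitoneOn f (Set.Icc 0 b) := by
    apply antitoneOn_of_deriv_nonpos (convex_Icc 0 b) hcont
    · rw [interior_Icc]
      exact fun t ht => (hderiv t ht).differentiableAt.differentiableWithinAt
    · rw [interior_Icc]
      intro t ht
      rw [(hderiv t ht).deriv]
      exact hle t ht.1 ht.2.le
  exact hanti (Set.left_mem_Icc.2 hb) (Set.right_mem_Icc.2 hb) hb

/-- Let `M, C > 0` and let `U, V : [0,∞) → ℝ` be nonnegative and
differentiable with `U' ≤ (−4M + 4C²V)U`, `V' ≤ C U`, `U(0) ≤ M²/(4C³)` and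
`V(0) ≤ M/(8C²)`. Then for all `t ≥ 0`: `U(t) ≤ U(0) e^{−2Mt}` and
`V(t) ≤ V(0) + (C/(2M)) U(0) ≤ M/(4C²)`. -/
theorem stmt_12 (M C : ℝ) (hM : 0 < M) (hC : 0 < C)
    (U V U' V' : ℝ → ℝ)
    (hU : ∀ t : ℝ, 0 ≤ t → HasDerivWithinAt U (U' t) (Set.Ici (0 : ℝ)) t)
    (hV : ∀ t : ℝ, 0 ≤ t → HasDerivWithinAt V (V' t) (Set.Ici (0 : ℝ)) t)
    (hUpos : ∀ t : ℝ, 0 ≤ t → 0 ≤ U t)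
    (hVpos : ∀ t : ℝ, 0 ≤ t → 0 ≤ V t)
    (hU' : ∀ t : ℝ, 0 ≤ t → U' t ≤ (-4 * M + 4 * C ^ 2 * V t) * U t)
    (hV' : ∀ t : ℝ, 0 ≤ t → V' t ≤ C * U t)
    (hU0 : U 0 ≤ M ^ 2 / (4 * C ^ 3))
    (hV0 : V 0 ≤ M / (8 * C ^ 2)) :
    ∀ t : ℝ, 0 ≤ t →
      U t ≤ U 0 * Real.exp (-2 * M * t) ∧
      V t ≤ V 0 + C / (2 * M) * U 0 ∧
      V 0 + C / (2 * M) * U 0 ≤ M / (4 * C ^ 2) := by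
  set c : ℝ := C / (2 * M) with hc
  have hcpos : 0 < c := by positivity
  set W : ℝ → ℝ := fun t => V t + c * U t with hWdef
  set W' : ℝ → ℝ := fun t => V' t + c * U' t with hW'def
  have hW : ∀ t : ℝ, 0 ≤ t → HasDerivWithinAt W (W' t) (Set.Ici 0) t := fun t ht =>
    (hV t ht).add ((hU t ht).const_mul c)
  have hVleW : ∀ t : ℝ, 0 ≤ t → V t ≤ W t := fun t ht => by
    have := mul_nonneg hcpos.le (hUpos t ht)
    simp only [hWdef]; linarith
  -- the third inequality (pure arithmetic)
  have harith : V 0 + c * U 0 ≤ M / (4 * C ^ 2) := by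
    have h1 : c * U 0 ≤ c * (M ^ 2 / (4 * C ^ 3)) :=
      mul_le_mul_of_nonneg_left hU0 hcpos.le
    have h2 : c * (M ^ 2 / (4 * C ^ 3)) = M / (8 * C ^ 2) := by
      rw [hc]; field_simp; ring
    rw [h2] at h1
    have h3 : M / (8 * C ^ 2) + M / (8 * C ^ 2) = M / (4 * C ^ 2) := by
      field_simp; ring
    linarith
  have hW0eq : W 0 = V 0 + c * U 0 := rfl
  have hW0 : W 0 ≤ M / (4 * C ^ 2) := by rw [hW0eq]; exact harith
  have hW0lt : W 0 < M / (2 * C ^ 2) := by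
    have : M / (4 * C ^ 2) < M / (2 * C ^ 2) := by
      apply div_lt_div_of_pos_left hM (by positivity) (by nlinarith)
    linarith
  -- derivative bound for W where V is small
  have hW'le : ∀ s : ℝ, 0 ≤ s → V s < M / (2 * C ^ 2) → W' s ≤ 0 := by
    intro s hs hVs
    have h1 := hU' s hs
    have h2 := hV' s hs
    have hUs := hUpos s hs
    have key : C * U s + c * ((-4 * M + 4 * C ^ 2 * V s) * U s) ≤ 0 := by
      have hfac : C + c * (-4 * M + 4 * C ^ 2 * V s) ≤ 0 := by
        have hV2 : V s * (2 * C ^ 2) < M := (lt_div_iff₀ (by positivity)).mp hVs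
        have heq : C + c * (-4 * M + 4 * C ^ 2 * V s)
            = C * (-2 * M + 4 * C ^ 2 * V s) / (2 * M) := by
          rw [hc]; field_simp; ring
        rw [heq]
        exact div_nonpos_iff.mpr (Or.inr ⟨by nlinarith, by positivity⟩)
      calc C * U s + c * ((-4 * M + 4 * C ^ 2 * V s) * U s)
          = (C + c * (-4 * M + 4 * C ^ 2 * V s)) * U s := by ring
        _ ≤ 0 := mul_nonpos_of_nonpos_of_nonneg hfac hUs
    have : W' s ≤ C * U s + c * ((-4 * M + 4 * C ^ 2 * V s) * U s) := by
      simp only [hW'def]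
      have := mul_le_mul_of_nonneg_left h1 hcpos.le
      linarith
    linarith
  -- bootstrap: W t ≤ W 0 for all t ≥ 0
  have hWle : ∀ t : ℝ, 0 ≤ t → W t ≤ W 0 := by
    by_contra hcon
    push_neg at hcon
    set S : Set ℝ := {t | 0 ≤ t ∧ W 0 < W t} with hS
    have hne : S.Nonempty := by
      obtain ⟨t, ht, hwt⟩ := hcon
      exact ⟨t, ht, hwt⟩
    have hbdd : BddBelow S := ⟨0, fun x hx => hx.1⟩
    set t0 : ℝ := sInf S with ht0
    have ht0nn : 0 ≤ t0 := le_csInf hne fun x hx => hx.1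
    -- W t0 ≤ W 0
    have hWt0 : W t0 ≤ W 0 := by
      by_contra hgt
      push_neg at hgt
      rcases eq_or_lt_of_le ht0nn with h0 | h0
      · rw [← h0] at hgt; exact lt_irrefl _ hgt
      · have hct : ContinuousAt W t0 :=
          ((hW t0 ht0nn).hasDerivAt (Ici_mem_nhds h0)).continuousAt
        have hev : ∀ᶠ x in nhds t0, W 0 < W x :=
          hct.eventually (eventually_gt_nhds hgt)
        have hev2 : ∀ᶠ x in nhds t0, 0 < x := eventually_gt_nhds h0
        obtain ⟨ε, εpos, hball⟩ := Metric.eventually_nhds_iff.mp (hev.and hev2)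
        have hx : t0 - ε / 2 ∈ S := by
          have := hball (y := t0 - ε / 2) (by
            rw [Real.dist_eq]; rw [abs_sub_lt_iff]; constructor <;> linarith)
          exact ⟨this.2.le, this.1⟩
        have : t0 ≤ t0 - ε / 2 := csInf_le hbdd hx
        linarith
    have hbelow : ∀ s : ℝ, 0 ≤ s → s ≤ t0 → W s ≤ W 0 := by
      intro s hs hst
      rcases eq_or_lt_of_le hst with h | h
      · rw [h]; exact hWt0
      · by_contra hgt
        push_neg at hgt
        exact absurd (csInf_le hbdd ⟨hs, hgt⟩) (not_le.2 h)
    -- V t0 strictly below threshold; use continuity to extend past t0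
    have hVt0 : V t0 < M / (2 * C ^ 2) :=
      lt_of_le_of_lt (le_trans (hVleW t0 ht0nn) hWt0) hW0lt
    have hVc : ContinuousWithinAt V (Set.Ici 0) t0 := (hV t0 ht0nn).continuousWithinAt
    have hev : ∀ᶠ x in nhdsWithin t0 (Set.Ici 0), V x < M / (2 * C ^ 2) :=
      hVc.eventually (eventually_lt_nhds hVt0)
    obtain ⟨δ, δpos, hball⟩ := Metric.mem_nhdsWithin_iff.mp hev
    have hVsmall : ∀ s : ℝ, 0 < s → s ≤ t0 + δ / 2 → V s < M / (2 * C ^ 2) := by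
      intro s hs hsb
      rcases le_or_gt s t0 with h | h
      · exact lt_of_le_of_lt (le_trans (hVleW s hs.le) (hbelow s hs.le h)) hW0lt
      · exact hball ⟨Metric.mem_ball.mpr (by
          rw [Real.dist_eq, abs_sub_lt_iff]; constructor <;> linarith), hs.le⟩
    have hWb : ∀ s : ℝ, 0 ≤ s → s ≤ t0 + δ / 2 → W s ≤ W 0 := by
      intro s hs hsb
      apply decr_aux W W' s hs hW
      intro u hu hus
      exact hW'le u hu.le (hVsmall u hu (le_trans hus hsb))
    obtain ⟨s, hsS, hsb⟩ := (csInf_lt_iff hbdd hne).mp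
      (by rw [← ht0]; linarith : sInf S < t0 + δ / 2)
    exact absurd (hWb s hsS.1 hsb.le) (not_le.2 hsS.2)
  -- conclusions
  intro t ht
  have hVsmall : ∀ s : ℝ, 0 ≤ s → V s ≤ M / (4 * C ^ 2) := fun s hs =>
    le_trans (le_trans (hVleW s hs) (hWle s hs)) hW0
  refine ⟨?_, by
    have h1 := hVleW t ht
    have h2 := hWle t ht
    rw [hW0eq] at h2; linarith, harith⟩
  -- exponential decay of U
  set G : ℝ → ℝ := fun s => U s * Real.exp (2 * M * s) with hG
  set G' : ℝ → ℝ := fun s => U' s * Real.exp (2 * M * s) + U s * (Real.exp (2 * M * s) * (2 * M)) with hG'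
  have hGd : ∀ s : ℝ, 0 ≤ s → HasDerivWithinAt G (G' s) (Set.Ici 0) s := by
    intro s hs
    have he : HasDerivAt (fun x => Real.exp (2 * M * x)) (Real.exp (2 * M * s) * (2 * M)) s := by
      have h1 : HasDerivAt (fun x : ℝ => 2 * M * x) (2 * M) s := by
        simpa using (hasDerivAt_id s).const_mul (2 * M)
      simpa using h1.exp
    exact (hU s hs).mul he.hasDerivWithinAt
  have hG'le : ∀ s : ℝ, 0 < s → s ≤ t → G' s ≤ 0 := by
    intro s hs _
    have h1 := hU' s hs.le
    have h2 := hVsmall s hs.le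
    have h3 := hUpos s hs.le
    have hexp : 0 < Real.exp (2 * M * s) := Real.exp_pos _
    have h2' : V s * (4 * C ^ 2) ≤ M := (le_div_iff₀ (by positivity)).mp h2
    have hU'le : U' s ≤ -2 * M * U s := by
      nlinarith [mul_nonneg h3 (by nlinarith : (0:ℝ) ≤ 2 * M - 4 * C ^ 2 * V s)]
    simp only [hG']
    nlinarith [mul_le_mul_of_nonneg_right hU'le hexp.le]
  have := decr_aux G G' t ht hGd hG'le
  simp only [hG] at this
  rw [mul_zero, Real.exp_zero, mul_one] at this
  have hexp : 0 < Real.exp (2 * M * t) := Real.exp_pos _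
  have : U t ≤ U 0 / Real.exp (2 * M * t) := (le_div_iff₀ hexp).mpr this
  calc U t ≤ U 0 / Real.exp (2 * M * t) := this
    _ = U 0 * Real.exp (-2 * M * t) := by
        rw [div_eq_mul_inv, ← Real.exp_neg]; ring_nf
end

section
/- There exists a constant c > 0 such that for every r ≥ 1, the function K(r) = ∫₀^∞ e^{−r cosh θ} cosh θ dθ satisfies 0 < K(r) ≤ c · r^{−1/2} e^{−r}. -/
open MeasureTheory

lemma my_cosh_lb (x : ℝ) (hx : 0 ≤ x) : 1 + x ^ 2 / 4 ≤ Real.cosh x := by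
  rw [Real.cosh_eq]
  have h1 := Real.quadratic_le_exp_of_nonneg hx
  have h2 := Real.add_one_le_exp (-x)
  nlinarith

lemma my_cosh_ub (x : ℝ) (hx : 0 ≤ x) : Real.cosh x ≤ Real.exp x := by
  rw [Real.cosh_eq]
  have h1 : Real.exp (-x) ≤ Real.exp x := Real.exp_le_exp.2 (by linarith)
  linarith

lemma my_ptwise (r θ : ℝ) (hr : 1 ≤ r) (hθ : 0 ≤ θ) :
    Real.exp (-r * Real.cosh θ) * Real.cosh θ
      ≤ Real.exp (1 - r) * Real.exp (-(r / 4) * (θ - 2 / r) ^ 2) := by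
  have hr0 : 0 < r := by linarith
  have h1 : Real.exp (-r * Real.cosh θ) ≤ Real.exp (-r * (1 + θ ^ 2 / 4)) := by
    apply Real.exp_le_exp.2
    have := my_cosh_lb θ hθ
    nlinarith
  have h2 : Real.cosh θ ≤ Real.exp θ := my_cosh_ub θ hθ
  have h3 : Real.exp (-r * Real.cosh θ) * Real.cosh θ
      ≤ Real.exp (-r * (1 + θ ^ 2 / 4)) * Real.exp θ := by
    have hc : 0 < Real.cosh θ := Real.cosh_pos θ
    have := (Real.exp_pos (-r * (1 + θ ^ 2 / 4))).le
    nlinarith [Real.exp_pos (-r * Real.cosh θ)]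
  refine h3.trans ?_
  rw [← Real.exp_add, ← Real.exp_add]
  apply Real.exp_le_exp.2
  have key : -r * (1 + θ ^ 2 / 4) + θ = -r - (r / 4) * (θ - 2 / r) ^ 2 + 1 / r := by
    field_simp
    ring
  have h4 : 1 / r ≤ 1 := by
    rw [div_le_one hr0]; exact hr
  linarith [key]

/-- There is a constant `c > 0` such that for every `r ≥ 1`,
`0 < K(r) ≤ c r^{−1/2} e^{−r}`, where `K(r) = ∫₀^∞ e^{−r cosh θ} cosh θ dθ`. -/
theorem stmt_16 :
    ∃ c : ℝ, 0 < c ∧ ∀ r : ℝ, 1 ≤ r →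
      0 < (∫ θ in Set.Ioi (0 : ℝ), Real.exp (-r * Real.cosh θ) * Real.cosh θ) ∧
      (∫ θ in Set.Ioi (0 : ℝ), Real.exp (-r * Real.cosh θ) * Real.cosh θ)
        ≤ c * r ^ (-(1 / 2 : ℝ)) * Real.exp (-r) := by
  refine ⟨Real.exp 1 * Real.sqrt (4 * Real.pi), by positivity, fun r hr => ?_⟩
  have hr0 : 0 < r := by linarith
  set f : ℝ → ℝ := fun θ => Real.exp (-r * Real.cosh θ) * Real.cosh θ with hf
  set g : ℝ → ℝ := fun θ => Real.exp (1 - r) * Real.exp (-(r / 4) * (θ - 2 / r) ^ 2) with hg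
  have hgint : Integrable g := by
    apply Integrable.const_mul
    exact (integrable_exp_neg_mul_sq (by positivity : (0:ℝ) < r / 4)).comp_sub_right (2 / r)
  have hfcont : Continuous f := by
    continuity
  have hfpos : ∀ θ : ℝ, 0 < f θ := fun θ =>
    mul_pos (Real.exp_pos _) (Real.cosh_pos θ)
  have hfle : ∀ θ ∈ Set.Ioi (0:ℝ), f θ ≤ g θ := fun θ hθ =>
    my_ptwise r θ hr (le_of_lt hθ)
  have hfint : IntegrableOn f (Set.Ioi 0) := by
    apply Integrable.mono (hgint.integrableOn) hfcont.aestronglyMeasurable.restrict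
    filter_upwards [ae_restrict_mem measurableSet_Ioi] with θ hθ
    rw [Real.norm_eq_abs, Real.norm_eq_abs, abs_of_pos (hfpos θ),
      abs_of_pos (mul_pos (Real.exp_pos _) (Real.exp_pos _))]
    exact hfle θ hθ
  constructor
  · rw [setIntegral_pos_iff_support_of_nonneg_ae ?_ hfint]
    · have : Function.support f ∩ Set.Ioi (0:ℝ) = Set.Ioi 0 := by
        apply Set.inter_eq_self_of_subset_right
        intro x _
        exact (hfpos x).ne'
      rw [this]
      simp [Real.volume_Ioi]
    · filter_upwards with θ using (hfpos θ).le
  · have step1 : (∫ θ in Set.Ioi (0:ℝ), f θ) ≤ ∫ θ in Set.Ioi (0:ℝ), g θ :=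
      setIntegral_mono_on hfint hgint.integrableOn measurableSet_Ioi hfle
    have step2 : (∫ θ in Set.Ioi (0:ℝ), g θ) ≤ ∫ θ, g θ := by
      apply setIntegral_le_integral hgint
      filter_upwards with θ using (mul_pos (Real.exp_pos _) (Real.exp_pos _)).le
    have step3 : (∫ θ, g θ) = Real.exp (1 - r) * Real.sqrt (Real.pi / (r / 4)) := by
      rw [hg, integral_const_mul]
      congr 1
      rw [show (∫ θ : ℝ, Real.exp (-(r / 4) * (θ - 2 / r) ^ 2))
          = ∫ θ : ℝ, Real.exp (-(r / 4) * θ ^ 2) from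
        integral_sub_right_eq_self (fun θ : ℝ => Real.exp (-(r / 4) * θ ^ 2)) (2 / r)]
      exact integral_gaussian (r / 4)
    have key : Real.exp (1 - r) * Real.sqrt (Real.pi / (r / 4))
        = Real.exp 1 * Real.sqrt (4 * Real.pi) * r ^ (-(1 / 2 : ℝ)) * Real.exp (-r) := by
      rw [show Real.pi / (r / 4) = 4 * Real.pi / r by ring,
        Real.sqrt_div' (4 * Real.pi) (by positivity), Real.rpow_neg hr0.le,
        ← Real.sqrt_eq_rpow, show (1:ℝ) - r = 1 + -r by ring, Real.exp_add]
      ring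
    calc (∫ θ in Set.Ioi (0:ℝ), f θ) ≤ ∫ θ, g θ := step1.trans step2
      _ = _ := by rw [step3, key]
end
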